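/- Let M be a module over a commutative ring with submodules J₁,…,Jₙ satisfying ⋂ᵢ Jᵢ = {0}, and suppose the canonical map κ : M → M^c (as above) is surjective. Then for every k, ⋂_{i≠k}(Jᵢ + J_k) = (⋂_{i≠k} Jᵢ) + J_k. -/
import Mathlib


/-- If `(Jᵢ)` is a complete covering of `M` (the intersection is zero and the
canonical map to the covering completion is surjective), then for every `k`,
`⋂_{i≠k}(Jᵢ + J_k) = (⋂_{i≠k} Jᵢ) + J_k`. -/
theorem complete_covering_necessary_condition
    {K M ι : Type*} [CommRing K] [AddCommGroup M] [Module K M] [Fintype ι]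
    (J : ι → Submodule K M)
    (hcover : (⨅ i, J i) = ⊥)
    (hsurj : ∀ f : ∀ i : ι, M ⧸ J i,
      (∀ i j : ι,
        Submodule.mapQ (J i) (J i ⊔ J j) LinearMap.id
            (by rw [Submodule.comap_id]; exact le_sup_left) (f i) =
          Submodule.mapQ (J j) (J i ⊔ J j) LinearMap.id
            (by rw [Submodule.comap_id]; exact le_sup_right) (f j)) →
      ∃ m : M, ∀ i : ι, (Submodule.Quotient.mk m : M ⧸ J i) = f i) :
    ∀ k : ι,
      (⨅ i : ι, ⨅ _ : i ≠ k, (J i ⊔ J k)) =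
        (⨅ i : ι, ⨅ _ : i ≠ k, J i) ⊔ J k := by
  intro k
  apply le_antisymm
  · intro x hx
    simp only [Submodule.mem_iInf] at hx
    classical
    set f : ∀ i : ι, M ⧸ J i :=
      fun i => if i = k then 0 else Submodule.Quotient.mk x with hf
    have hcompat : ∀ i j : ι,
        Submodule.mapQ (J i) (J i ⊔ J j) LinearMap.id
            (by rw [Submodule.comap_id]; exact le_sup_left) (f i) =
          Submodule.mapQ (J j) (J i ⊔ J j) LinearMap.id
            (by rw [Submodule.comap_id]; exact le_sup_right) (f j) := by
      intro i j
      simp only [hf]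
      by_cases hi : i = k <;> by_cases hj : j = k
      · rw [if_pos hi, if_pos hj, map_zero, map_zero]
      · rw [if_pos hi, if_neg hj, map_zero, Submodule.mapQ_apply, eq_comm,
          LinearMap.id_apply, Submodule.Quotient.mk_eq_zero]
        exact hi ▸ (sup_comm (J j) (J k)) ▸ hx j hj
      · rw [if_neg hi, if_pos hj, map_zero, Submodule.mapQ_apply,
          LinearMap.id_apply, Submodule.Quotient.mk_eq_zero]
        exact hj ▸ hx i hi
      · rw [if_neg hi, if_neg hj, Submodule.mapQ_apply, Submodule.mapQ_apply]
    obtain ⟨m, hm⟩ := hsurj f hcompat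
    have hmk : m ∈ J k := by
      have := hm k
      simp only [hf, if_pos rfl] at this
      exact (Submodule.Quotient.mk_eq_zero _).1 this
    have hxm : x - m ∈ ⨅ i : ι, ⨅ _ : i ≠ k, J i := by
      simp only [Submodule.mem_iInf]
      intro i hik
      have := hm i
      simp only [hf, if_neg hik] at this
      rw [Submodule.Quotient.eq] at this
      exact (Submodule.neg_mem_iff _).1 (by simpa using this)
    have hx' : x = (x - m) + m := by abel
    rw [hx']
    exact Submodule.add_mem_sup hxm hmk
  · apply sup_le
    · exact le_iInf fun i => le_iInf fun hi =>
        le_sup_left.trans' (iInf_le_of_le i (iInf_le _ hi))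
    · exact le_iInf fun i => le_iInf fun hi => le_sup_right
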